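/- Let (X,Y,Z) be finite random variables and T(X) a conditionally sufficient statistic for Z given Y, i.e., Z–(T(X),Y)–(X,Y) is a Markov chain. Then the remote rate-distortion function with encoder observing (X,Y) and decoder side information Y equals the one with encoder observing (T(X),Y): R(D) = min_{p(u|x,y), f: E d(Z,f(U,Y)) ≤ D} I(X;U|Y) equals R'(D) = min_{p(u|t,y), f: E d(Z,f(U,Y)) ≤ D} I(T(X);U|Y). -/

import Mathlib

open scoped Classical BigOperators

/-- Probability of a set of outcomes under a pmf `p` on a finite sample space. -/
noncomputable def pr {Ω : Type*} [Fintype Ω] (p : Ω → ℝ) (s : Set Ω) : ℝ :=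
  ∑ ω, if ω ∈ s then p ω else 0

/-- `p` is a probability mass function on the finite sample space `Ω`. -/
def IsPMF {Ω : Type*} [Fintype Ω] (p : Ω → ℝ) : Prop :=
  (∀ ω, 0 ≤ p ω) ∧ (∑ ω, p ω) = 1

/-- The Markov chain `A – B – C`: `A` and `C` are conditionally independent given `B`. -/
def MarkovChain {Ω α β γ : Type*} [Fintype Ω] (p : Ω → ℝ)
    (A : Ω → α) (B : Ω → β) (C : Ω → γ) : Prop :=
  ∀ (a : α) (b : β) (c : γ),
    pr p {ω | A ω = a ∧ B ω = b ∧ C ω = c} * pr p {ω | B ω = b} =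
      pr p {ω | A ω = a ∧ B ω = b} * pr p {ω | B ω = b ∧ C ω = c}

/-- Conditional Shannon entropy `H(A | B)`. -/
noncomputable def condEnt {Ω α β : Type*} [Fintype Ω] [Fintype α] [Fintype β]
    (p : Ω → ℝ) (A : Ω → α) (B : Ω → β) : ℝ :=
  -∑ a : α, ∑ b : β,
    pr p {ω | A ω = a ∧ B ω = b} *
      Real.log (pr p {ω | A ω = a ∧ B ω = b} / pr p {ω | B ω = b})

/-- Mutual information `I(A ; B)`. -/
noncomputable def mutInfo {Ω α β : Type*} [Fintype Ω] [Fintype α] [Fintype β]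
    (p : Ω → ℝ) (A : Ω → α) (B : Ω → β) : ℝ :=
  ∑ a : α, ∑ b : β,
    pr p {ω | A ω = a ∧ B ω = b} *
      Real.log (pr p {ω | A ω = a ∧ B ω = b} /
        (pr p {ω | A ω = a} * pr p {ω | B ω = b}))

/-- Conditional mutual information `I(A ; B | C) = H(A|C) - H(A|B,C)`. -/
noncomputable def condMI {Ω α β γ : Type*} [Fintype Ω] [Fintype α] [Fintype β] [Fintype γ]
    (p : Ω → ℝ) (A : Ω → α) (B : Ω → β) (C : Ω → γ) : ℝ :=
  condEnt p A C - condEnt p A (fun ω => (B ω, C ω))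

section Helpers
variable {Ω : Type*} [Fintype Ω]

lemma pr_nonneg (p : Ω → ℝ) (h : ∀ ω, 0 ≤ p ω) (s : Set Ω) : 0 ≤ pr p s := by
  refine Finset.sum_nonneg fun ω _ => ?_
  split <;> simp [h ω]

lemma pr_mono (p : Ω → ℝ) (h : ∀ ω, 0 ≤ p ω) {s t : Set Ω} (hst : s ⊆ t) :
    pr p s ≤ pr p t := by
  refine Finset.sum_le_sum fun ω _ => ?_
  by_cases hs : ω ∈ s
  · simp [hs, hst hs]
  · simp only [hs, if_false]
    split <;> simp [h ω]

lemma pr_congr (p : Ω → ℝ) {s t : Set Ω} (hst : ∀ ω, ω ∈ s ↔ ω ∈ t) : pr p s = pr p t := by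
  rw [Set.ext hst]

lemma pr_sum_fiber {α : Type*} [Fintype α] (p : Ω → ℝ) (g : Ω → α) (s : Set Ω) :
    ∑ a : α, pr p {ω | g ω = a ∧ ω ∈ s} = pr p s := by
  unfold pr
  rw [Finset.sum_comm]
  refine Finset.sum_congr rfl fun ω _ => ?_
  by_cases hs : ω ∈ s
  · simp [hs, Finset.sum_ite_eq]
  · simp [hs]

lemma sum_fiber_weight {α τ : Type*} [Fintype α] [Fintype τ]
    (p : Ω → ℝ) (X : Ω → α) (Tm : α → τ) (Q : Set Ω) (g : τ → ℝ) :
    ∑ t : τ, pr p {ω | Tm (X ω) = t ∧ ω ∈ Q} * g t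
      = ∑ x : α, pr p {ω | X ω = x ∧ ω ∈ Q} * g (Tm x) := by
  simp only [pr, Finset.sum_mul, ite_mul, zero_mul]
  rw [Finset.sum_comm, Finset.sum_comm (γ := α)]
  refine Finset.sum_congr rfl fun ω _ => ?_
  by_cases hq : ω ∈ Q
  · simp only [Set.mem_setOf_eq, hq, and_true]
    rw [Finset.sum_ite_eq, Finset.sum_ite_eq]
    simp
  · simp [hq]

end Helpers
section Helpers2
variable {Ω : Type*} [Fintype Ω]

lemma condMI_eq {α β γ : Type*} [Fintype α] [Fintype β] [Fintype γ]
    (p : Ω → ℝ) (h0 : ∀ ω, 0 ≤ p ω) (A : Ω → α) (B : Ω → β) (C : Ω → γ) :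
    condMI p A B C = ∑ a : α, ∑ b : β, ∑ c : γ,
      pr p {ω | A ω = a ∧ B ω = b ∧ C ω = c} *
        Real.log (pr p {ω | A ω = a ∧ B ω = b ∧ C ω = c} * pr p {ω | C ω = c} /
          (pr p {ω | A ω = a ∧ C ω = c} * pr p {ω | B ω = b ∧ C ω = c})) := by
  unfold condMI condEnt
  have h2 : ∀ a : α, ∑ bc : β × γ,
      pr p {ω | A ω = a ∧ (B ω, C ω) = bc} *
        Real.log (pr p {ω | A ω = a ∧ (B ω, C ω) = bc} / pr p {ω | (B ω, C ω) = bc})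
      = ∑ b : β, ∑ c : γ,
      pr p {ω | A ω = a ∧ B ω = b ∧ C ω = c} *
        Real.log (pr p {ω | A ω = a ∧ B ω = b ∧ C ω = c} /
          pr p {ω | B ω = b ∧ C ω = c}) := by
    intro a
    rw [Fintype.sum_prod_type]
    refine Finset.sum_congr rfl fun b _ => Finset.sum_congr rfl fun c _ => ?_
    have e1 : {ω | A ω = a ∧ (B ω, C ω) = (b, c)} = {ω | A ω = a ∧ B ω = b ∧ C ω = c} := by
      ext ω; simp [Prod.ext_iff, and_assoc]
    have e2 : {ω | (B ω, C ω) = (b, c)} = {ω | B ω = b ∧ C ω = c} := by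
      ext ω; simp [Prod.ext_iff]
    rw [e1, e2]
  simp only [h2]
  have hmarg : ∀ (a : α) (c : γ), pr p {ω | A ω = a ∧ C ω = c}
      = ∑ b : β, pr p {ω | A ω = a ∧ B ω = b ∧ C ω = c} := by
    intro a c
    rw [← pr_sum_fiber p B {ω | A ω = a ∧ C ω = c}]
    refine Finset.sum_congr rfl fun b _ => pr_congr p fun ω => ?_
    simp only [Set.mem_setOf_eq]; tauto
  have hS1 : (∑ a : α, ∑ c : γ,
      pr p {ω | A ω = a ∧ C ω = c} *
        Real.log (pr p {ω | A ω = a ∧ C ω = c} / pr p {ω | C ω = c}))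
      = ∑ a : α, ∑ b : β, ∑ c : γ,
      pr p {ω | A ω = a ∧ B ω = b ∧ C ω = c} *
        Real.log (pr p {ω | A ω = a ∧ C ω = c} / pr p {ω | C ω = c}) := by
    refine Finset.sum_congr rfl fun a _ => ?_
    rw [Finset.sum_comm]
    refine Finset.sum_congr rfl fun c _ => ?_
    rw [hmarg a c, Finset.sum_mul]
  rw [hS1, neg_sub_neg, ← Finset.sum_sub_distrib]
  refine Finset.sum_congr rfl fun a _ => ?_
  rw [← Finset.sum_sub_distrib]
  refine Finset.sum_congr rfl fun b _ => ?_
  rw [← Finset.sum_sub_distrib]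
  refine Finset.sum_congr rfl fun c _ => ?_
  set Pabc := pr p {ω | A ω = a ∧ B ω = b ∧ C ω = c} with hPabc
  set Pac := pr p {ω | A ω = a ∧ C ω = c} with hPac
  set Pbc := pr p {ω | B ω = b ∧ C ω = c} with hPbc
  set Pc := pr p {ω | C ω = c} with hPc
  rcases eq_or_lt_of_le (pr_nonneg p h0 {ω | A ω = a ∧ B ω = b ∧ C ω = c}) with h | h
  · rw [← hPabc] at h; rw [← h]; ring
  · rw [← hPabc] at h
    have hbc : 0 < Pbc := lt_of_lt_of_le h (pr_mono p h0 (by intro ω hω; exact ⟨hω.2.1, hω.2.2⟩))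
    have hac : 0 < Pac := lt_of_lt_of_le h (pr_mono p h0 (by intro ω hω; exact ⟨hω.1, hω.2.2⟩))
    have hc : 0 < Pc := lt_of_lt_of_le h (pr_mono p h0 (by intro ω hω; exact hω.2.2))
    rw [Real.log_div h.ne' hbc.ne', Real.log_div hac.ne' hc.ne',
      Real.log_div (mul_ne_zero h.ne' hc.ne') (mul_ne_zero hac.ne' hbc.ne'),
      Real.log_mul h.ne' hc.ne', Real.log_mul hac.ne' hbc.ne']
    ring

end Helpers2
section Helpers3
variable {Ω : Type*} [Fintype Ω]
variable {α β γ : Type*} [Fintype α] [Fintype β] [Fintype γ]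

lemma condMI_symm (p : Ω → ℝ) (h0 : ∀ ω, 0 ≤ p ω) (A : Ω → α) (B : Ω → β) (C : Ω → γ) :
    condMI p A B C = condMI p B A C := by
  rw [condMI_eq p h0 A B C, condMI_eq p h0 B A C, Finset.sum_comm]
  refine Finset.sum_congr rfl fun b _ => Finset.sum_congr rfl fun a _ =>
    Finset.sum_congr rfl fun c _ => ?_
  have e1 : {ω | A ω = a ∧ B ω = b ∧ C ω = c} = {ω | B ω = b ∧ A ω = a ∧ C ω = c} := by
    ext ω; simp only [Set.mem_setOf_eq]; tauto
  rw [e1, mul_comm (pr p {ω | A ω = a ∧ C ω = c})]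

lemma pr_univ (p : Ω → ℝ) (h1 : (∑ ω, p ω) = 1) : pr p Set.univ = 1 := by
  unfold pr; simpa using h1

lemma pr_fiber_univ (p : Ω → ℝ) (h1 : (∑ ω, p ω) = 1) (g : Ω → α) :
    ∑ a : α, pr p {ω | g ω = a} = 1 := by
  rw [← pr_univ p h1, ← pr_sum_fiber p g Set.univ]
  exact Finset.sum_congr rfl fun a _ => pr_congr p fun ω => by
    simp only [Set.mem_setOf_eq, Set.mem_univ, and_true]

lemma condMI_nonneg (p : Ω → ℝ) (hp : IsPMF p) (A : Ω → α) (B : Ω → β) (C : Ω → γ) :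
    0 ≤ condMI p A B C := by
  obtain ⟨h0, h1⟩ := hp
  rw [condMI_eq p h0 A B C]
  have hBc : ∀ c, ∑ b : β, pr p {ω | B ω = b ∧ C ω = c} = pr p {ω | C ω = c} :=
    fun c => pr_sum_fiber p B {ω | C ω = c}
  have hAc : ∀ c, ∑ a : α, pr p {ω | A ω = a ∧ C ω = c} = pr p {ω | C ω = c} :=
    fun c => pr_sum_fiber p A {ω | C ω = c}
  have hCu : ∑ c : γ, pr p {ω | C ω = c} = 1 := pr_fiber_univ p h1 C
  have hTot : (∑ a : α, ∑ b : β, ∑ c : γ, pr p {ω | A ω = a ∧ B ω = b ∧ C ω = c}) = 1 := by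
    have h3 : ∀ a b, ∑ c : γ, pr p {ω | A ω = a ∧ B ω = b ∧ C ω = c}
        = pr p {ω | A ω = a ∧ B ω = b} := by
      intro a b
      rw [← pr_sum_fiber p C {ω | A ω = a ∧ B ω = b}]
      exact Finset.sum_congr rfl fun c _ => pr_congr p fun ω => by
        simp only [Set.mem_setOf_eq]; tauto
    have h4 : ∀ a, ∑ b : β, pr p {ω | A ω = a ∧ B ω = b} = pr p {ω | A ω = a} := by
      intro a
      rw [← pr_sum_fiber p B {ω | A ω = a}]
      exact Finset.sum_congr rfl fun b _ => pr_congr p fun ω => by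
        simp only [Set.mem_setOf_eq]; tauto
    simp only [h3, h4, pr_fiber_univ p h1 A]
  -- the auxiliary quantity
  set Q : α → β → γ → ℝ := fun a b c =>
    if pr p {ω | C ω = c} = 0 then 0
    else pr p {ω | A ω = a ∧ C ω = c} * pr p {ω | B ω = b ∧ C ω = c} / pr p {ω | C ω = c}
    with hQ
  have hkey : ∀ a b c,
      -(pr p {ω | A ω = a ∧ B ω = b ∧ C ω = c} *
        Real.log (pr p {ω | A ω = a ∧ B ω = b ∧ C ω = c} * pr p {ω | C ω = c} /
          (pr p {ω | A ω = a ∧ C ω = c} * pr p {ω | B ω = b ∧ C ω = c})))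
      ≤ Q a b c - pr p {ω | A ω = a ∧ B ω = b ∧ C ω = c} := by
    intro a b c
    rcases eq_or_lt_of_le (pr_nonneg p h0 {ω | A ω = a ∧ B ω = b ∧ C ω = c}) with h | h
    · rw [← h]
      simp only [zero_mul, neg_zero, sub_zero, hQ]
      split
      · exact le_rfl
      · exact div_nonneg (mul_nonneg (pr_nonneg p h0 _) (pr_nonneg p h0 _)) (pr_nonneg p h0 _)
    · have hbc : 0 < pr p {ω | B ω = b ∧ C ω = c} :=
        lt_of_lt_of_le h (pr_mono p h0 fun ω hω => ⟨hω.2.1, hω.2.2⟩)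
      have hac : 0 < pr p {ω | A ω = a ∧ C ω = c} :=
        lt_of_lt_of_le h (pr_mono p h0 fun ω hω => ⟨hω.1, hω.2.2⟩)
      have hc : 0 < pr p {ω | C ω = c} :=
        lt_of_lt_of_le h (pr_mono p h0 fun ω hω => hω.2.2)
      have hQ' : Q a b c = pr p {ω | A ω = a ∧ C ω = c} * pr p {ω | B ω = b ∧ C ω = c}
          / pr p {ω | C ω = c} := by rw [hQ]; simp [hc.ne']
      rw [hQ']
      set P := pr p {ω | A ω = a ∧ B ω = b ∧ C ω = c} with hP
      set Pac := pr p {ω | A ω = a ∧ C ω = c}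
      set Pbc := pr p {ω | B ω = b ∧ C ω = c}
      set Pc := pr p {ω | C ω = c}
      have hx : 0 < Pac * Pbc / (Pc * P) := by positivity
      have hlog := Real.log_le_sub_one_of_pos hx
      have e : Real.log (Pac * Pbc / (Pc * P)) = -Real.log (P * Pc / (Pac * Pbc)) := by
        rw [Real.log_div (by positivity) (by positivity),
          Real.log_div (by positivity) (by positivity),
          Real.log_mul hac.ne' hbc.ne', Real.log_mul h.ne' hc.ne', Real.log_mul hc.ne' h.ne']
        ring
      rw [e] at hlog
      have h2 := mul_le_mul_of_nonneg_left hlog h.le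
      have emul : P * (Pac * Pbc / (Pc * P)) = Pac * Pbc / Pc := by field_simp
      calc -(P * Real.log (P * Pc / (Pac * Pbc)))
          = P * -Real.log (P * Pc / (Pac * Pbc)) := by ring
        _ ≤ P * (Pac * Pbc / (Pc * P) - 1) := h2
        _ = P * (Pac * Pbc / (Pc * P)) - P := by ring
        _ = Pac * Pbc / Pc - P := by rw [emul]
  have hsum1 : -(∑ a : α, ∑ b : β, ∑ c : γ,
      pr p {ω | A ω = a ∧ B ω = b ∧ C ω = c} *
        Real.log (pr p {ω | A ω = a ∧ B ω = b ∧ C ω = c} * pr p {ω | C ω = c} /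
          (pr p {ω | A ω = a ∧ C ω = c} * pr p {ω | B ω = b ∧ C ω = c})))
      ≤ (∑ a, ∑ b, ∑ c, Q a b c)
        - ∑ a, ∑ b, ∑ c, pr p {ω | A ω = a ∧ B ω = b ∧ C ω = c} := by
    rw [← Finset.sum_sub_distrib, ← Finset.sum_neg_distrib]
    refine Finset.sum_le_sum fun a _ => ?_
    rw [← Finset.sum_sub_distrib, ← Finset.sum_neg_distrib]
    refine Finset.sum_le_sum fun b _ => ?_
    rw [← Finset.sum_sub_distrib, ← Finset.sum_neg_distrib]
    exact Finset.sum_le_sum fun c _ => hkey a b c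
  have hQsum : (∑ a, ∑ b, ∑ c, Q a b c) ≤ 1 := by
    have swap : (∑ a : α, ∑ b : β, ∑ c : γ, Q a b c) = ∑ c : γ, ∑ a : α, ∑ b : β, Q a b c := by
      rw [show (∑ a : α, ∑ b : β, ∑ c : γ, Q a b c) = ∑ a, ∑ c, ∑ b, Q a b c
        from Finset.sum_congr rfl fun _ _ => Finset.sum_comm, Finset.sum_comm]
    rw [swap, ← hCu]
    refine Finset.sum_le_sum fun c _ => ?_
    by_cases hc : pr p {ω | C ω = c} = 0
    · simp only [hQ, hc, if_true, Finset.sum_const_zero]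
      exact le_rfl
    · have hb : ∀ a, ∑ b : β, Q a b c = pr p {ω | A ω = a ∧ C ω = c} := by
        intro a
        simp only [hQ, if_neg hc]
        rw [← Finset.sum_div, ← Finset.mul_sum, hBc c,
          mul_div_assoc, div_self hc, mul_one]
      simp only [hb, hAc c, le_refl]
  linarith [hsum1, hQsum, hTot]

end Helpers3
section Helpers4
variable {Ω : Type*} [Fintype Ω]
variable {υ α β τ : Type*} [Fintype υ] [Fintype α] [Fintype β] [Fintype τ]

lemma condMI_diff (p : Ω → ℝ) (h0 : ∀ ω, 0 ≤ p ω)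
    (U : Ω → υ) (X : Ω → α) (Y : Ω → β) (Tm : α → τ) :
    condMI p U X Y - condMI p U (fun ω => Tm (X ω)) Y
      = ∑ u : υ, ∑ x : α, ∑ y : β,
        pr p {ω | U ω = u ∧ X ω = x ∧ Y ω = y} *
          Real.log (pr p {ω | U ω = u ∧ X ω = x ∧ Y ω = y} *
              pr p {ω | Tm (X ω) = Tm x ∧ Y ω = y} /
            (pr p {ω | X ω = x ∧ Y ω = y} *
              pr p {ω | U ω = u ∧ Tm (X ω) = Tm x ∧ Y ω = y})) := by
  rw [condMI_eq p h0 U X Y, condMI_eq p h0 U (fun ω => Tm (X ω)) Y]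
  have hconv : ∀ u : υ, (∑ t : τ, ∑ y : β,
      pr p {ω | U ω = u ∧ Tm (X ω) = t ∧ Y ω = y} *
        Real.log (pr p {ω | U ω = u ∧ Tm (X ω) = t ∧ Y ω = y} * pr p {ω | Y ω = y} /
          (pr p {ω | U ω = u ∧ Y ω = y} * pr p {ω | Tm (X ω) = t ∧ Y ω = y})))
      = ∑ x : α, ∑ y : β,
      pr p {ω | U ω = u ∧ X ω = x ∧ Y ω = y} *
        Real.log (pr p {ω | U ω = u ∧ Tm (X ω) = Tm x ∧ Y ω = y} * pr p {ω | Y ω = y} /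
          (pr p {ω | U ω = u ∧ Y ω = y} * pr p {ω | Tm (X ω) = Tm x ∧ Y ω = y})) := by
    intro u
    rw [Finset.sum_comm, Finset.sum_comm (γ := α)]
    refine Finset.sum_congr rfl fun y _ => ?_
    have base := sum_fiber_weight p X Tm {ω | U ω = u ∧ Y ω = y}
      (fun t => Real.log (pr p {ω | U ω = u ∧ Tm (X ω) = t ∧ Y ω = y} * pr p {ω | Y ω = y} /
          (pr p {ω | U ω = u ∧ Y ω = y} * pr p {ω | Tm (X ω) = t ∧ Y ω = y})))
    have l1 : ∀ t : τ, pr p {ω | Tm (X ω) = t ∧ ω ∈ {ω | U ω = u ∧ Y ω = y}}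
        = pr p {ω | U ω = u ∧ Tm (X ω) = t ∧ Y ω = y} := fun t => pr_congr p fun ω => by
      simp only [Set.mem_setOf_eq]; tauto
    have l2 : ∀ x : α, pr p {ω | X ω = x ∧ ω ∈ {ω | U ω = u ∧ Y ω = y}}
        = pr p {ω | U ω = u ∧ X ω = x ∧ Y ω = y} := fun x => pr_congr p fun ω => by
      simp only [Set.mem_setOf_eq]; tauto
    simp only [l1, l2] at base
    exact base
  simp only [← Finset.sum_sub_distrib]
  refine Finset.sum_congr rfl fun u _ => ?_
  rw [hconv u, ← Finset.sum_sub_distrib]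
  refine Finset.sum_congr rfl fun x _ => ?_
  rw [← Finset.sum_sub_distrib]
  refine Finset.sum_congr rfl fun y _ => ?_
  rcases eq_or_lt_of_le (pr_nonneg p h0 {ω | U ω = u ∧ X ω = x ∧ Y ω = y}) with h | h
  · rw [← h]; ring
  · have hxy : 0 < pr p {ω | X ω = x ∧ Y ω = y} :=
      lt_of_lt_of_le h (pr_mono p h0 fun ω hω => ⟨hω.2.1, hω.2.2⟩)
    have huy : 0 < pr p {ω | U ω = u ∧ Y ω = y} :=
      lt_of_lt_of_le h (pr_mono p h0 fun ω hω => ⟨hω.1, hω.2.2⟩)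
    have hy : 0 < pr p {ω | Y ω = y} :=
      lt_of_lt_of_le h (pr_mono p h0 fun ω hω => hω.2.2)
    have htxy : 0 < pr p {ω | Tm (X ω) = Tm x ∧ Y ω = y} :=
      lt_of_lt_of_le hxy (pr_mono p h0 fun ω hω => ⟨by rw [hω.1], hω.2⟩)
    have hutxy : 0 < pr p {ω | U ω = u ∧ Tm (X ω) = Tm x ∧ Y ω = y} :=
      lt_of_lt_of_le h (pr_mono p h0 fun ω hω => ⟨hω.1, by rw [hω.2.1], hω.2.2⟩)
    rw [Real.log_div (by positivity) (by positivity),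
      Real.log_div (by positivity) (by positivity),
      Real.log_div (by positivity) (by positivity),
      Real.log_mul h.ne' hy.ne', Real.log_mul huy.ne' hxy.ne',
      Real.log_mul hutxy.ne' hy.ne', Real.log_mul huy.ne' htxy.ne',
      Real.log_mul h.ne' htxy.ne', Real.log_mul hxy.ne' hutxy.ne']
    ring

lemma condMI_TX (p : Ω → ℝ) (h0 : ∀ ω, 0 ≤ p ω)
    (U : Ω → υ) (X : Ω → α) (Y : Ω → β) (Tm : α → τ) :
    condMI p U X (fun ω => (Tm (X ω), Y ω))
      = ∑ u : υ, ∑ x : α, ∑ y : β,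
        pr p {ω | U ω = u ∧ X ω = x ∧ Y ω = y} *
          Real.log (pr p {ω | U ω = u ∧ X ω = x ∧ Y ω = y} *
              pr p {ω | Tm (X ω) = Tm x ∧ Y ω = y} /
            (pr p {ω | X ω = x ∧ Y ω = y} *
              pr p {ω | U ω = u ∧ Tm (X ω) = Tm x ∧ Y ω = y})) := by
  rw [condMI_eq p h0 U X (fun ω => (Tm (X ω), Y ω))]
  refine Finset.sum_congr rfl fun u _ => Finset.sum_congr rfl fun x _ => ?_
  rw [Fintype.sum_prod_type]
  rw [Finset.sum_eq_single (Tm x)]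
  · refine Finset.sum_congr rfl fun y _ => ?_
    have e1 : {ω | U ω = u ∧ X ω = x ∧ (Tm (X ω), Y ω) = (Tm x, y)}
        = {ω | U ω = u ∧ X ω = x ∧ Y ω = y} := by
      ext ω; simp only [Set.mem_setOf_eq, Prod.mk.injEq]
      constructor
      · rintro ⟨h1, h2, _, h4⟩; exact ⟨h1, h2, h4⟩
      · rintro ⟨h1, h2, h3⟩; exact ⟨h1, h2, by rw [h2], h3⟩
    have e2 : {ω | U ω = u ∧ (Tm (X ω), Y ω) = (Tm x, y)}
        = {ω | U ω = u ∧ Tm (X ω) = Tm x ∧ Y ω = y} := by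
      ext ω; simp [Prod.ext_iff]
    have e3 : {ω | X ω = x ∧ (Tm (X ω), Y ω) = (Tm x, y)}
        = {ω | X ω = x ∧ Y ω = y} := by
      ext ω; simp only [Set.mem_setOf_eq, Prod.mk.injEq]
      constructor
      · rintro ⟨h1, _, h3⟩; exact ⟨h1, h3⟩
      · rintro ⟨h1, h2⟩; exact ⟨h1, by rw [h1], h2⟩
    have e4 : {ω | (Tm (X ω), Y ω) = (Tm x, y)}
        = {ω | Tm (X ω) = Tm x ∧ Y ω = y} := by
      ext ω; simp [Prod.ext_iff]
    rw [e1, e2, e3, e4, mul_comm (pr p {ω | U ω = u ∧ Tm (X ω) = Tm x ∧ Y ω = y})]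
  · intro t _ ht
    refine Finset.sum_eq_zero fun y _ => ?_
    have : pr p {ω | U ω = u ∧ X ω = x ∧ (Tm (X ω), Y ω) = (t, y)} = 0 := by
      have : {ω | U ω = u ∧ X ω = x ∧ (Tm (X ω), Y ω) = (t, y)} = (∅ : Set Ω) := by
        ext ω; simp only [Set.mem_setOf_eq, Prod.mk.injEq, Set.mem_empty_iff_false, iff_false]
        rintro ⟨_, h2, h3, _⟩
        exact ht (h3 ▸ by rw [h2])
      rw [this]; unfold pr; simp
    rw [this, zero_mul]
  · intro h; exact absurd (Finset.mem_univ _) h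

lemma condMI_data_processing (p : Ω → ℝ) (hp : IsPMF p)
    (U : Ω → υ) (X : Ω → α) (Y : Ω → β) (Tm : α → τ) :
    condMI p U (fun ω => Tm (X ω)) Y ≤ condMI p U X Y := by
  have h1 := condMI_diff p hp.1 U X Y Tm
  have h2 := condMI_TX p hp.1 U X Y Tm
  have h3 := condMI_nonneg p hp U X (fun ω => (Tm (X ω), Y ω))
  linarith

lemma condMI_eq_of_markov (p : Ω → ℝ) (h0 : ∀ ω, 0 ≤ p ω)
    (U : Ω → υ) (X : Ω → α) (Y : Ω → β) (Tm : α → τ)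
    (hm : ∀ u x y, pr p {ω | U ω = u ∧ X ω = x ∧ Y ω = y} *
        pr p {ω | Tm (X ω) = Tm x ∧ Y ω = y}
      = pr p {ω | U ω = u ∧ Tm (X ω) = Tm x ∧ Y ω = y} *
        pr p {ω | X ω = x ∧ Y ω = y}) :
    condMI p U (fun ω => Tm (X ω)) Y = condMI p U X Y := by
  have h1 := condMI_diff p h0 U X Y Tm
  have : condMI p U X Y - condMI p U (fun ω => Tm (X ω)) Y = 0 := by
    rw [h1]
    refine Finset.sum_eq_zero fun u _ => Finset.sum_eq_zero fun x _ =>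
      Finset.sum_eq_zero fun y _ => ?_
    rcases eq_or_lt_of_le (pr_nonneg p h0 {ω | U ω = u ∧ X ω = x ∧ Y ω = y}) with h | h
    · rw [← h, zero_mul]
    · have hxy : 0 < pr p {ω | X ω = x ∧ Y ω = y} :=
        lt_of_lt_of_le h (pr_mono p h0 fun ω hω => ⟨hω.2.1, hω.2.2⟩)
      have hutxy : 0 < pr p {ω | U ω = u ∧ Tm (X ω) = Tm x ∧ Y ω = y} :=
        lt_of_lt_of_le h (pr_mono p h0 fun ω hω => ⟨hω.1, by rw [hω.2.1], hω.2.2⟩)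
      have harg : pr p {ω | U ω = u ∧ X ω = x ∧ Y ω = y} *
          pr p {ω | Tm (X ω) = Tm x ∧ Y ω = y} /
          (pr p {ω | X ω = x ∧ Y ω = y} *
            pr p {ω | U ω = u ∧ Tm (X ω) = Tm x ∧ Y ω = y}) = 1 := by
        rw [div_eq_one_iff_eq (by positivity), hm u x y]; ring
      rw [harg, Real.log_one, mul_zero]
  linarith

end Helpers4
section Helpers5

lemma pr_prod4 {𝒳 𝒴 𝒵 𝒰 : Type} [Fintype 𝒳] [Fintype 𝒴] [Fintype 𝒵] [Fintype 𝒰]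
    (r : 𝒳 × 𝒴 × 𝒵 × 𝒰 → ℝ) (S : Set (𝒳 × 𝒴 × 𝒵 × 𝒰)) :
    pr r S = ∑ x, ∑ y, ∑ z, ∑ u, if (x, y, z, u) ∈ S then r (x, y, z, u) else 0 := by
  unfold pr
  rw [Fintype.sum_prod_type]
  exact Finset.sum_congr rfl fun x _ => by
    rw [Fintype.sum_prod_type]
    exact Finset.sum_congr rfl fun y _ => by rw [Fintype.sum_prod_type]

lemma pr_prod3 {𝒳 𝒴 𝒵 : Type} [Fintype 𝒳] [Fintype 𝒴] [Fintype 𝒵]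
    (r : 𝒳 × 𝒴 × 𝒵 → ℝ) (S : Set (𝒳 × 𝒴 × 𝒵)) :
    pr r S = ∑ x, ∑ y, ∑ z, if (x, y, z) ∈ S then r (x, y, z) else 0 := by
  unfold pr
  rw [Fintype.sum_prod_type]
  exact Finset.sum_congr rfl fun x _ => by rw [Fintype.sum_prod_type]

variable {𝒳 𝒴 𝒵 𝒰 𝒯 : Type} [Fintype 𝒳] [Fintype 𝒴] [Fintype 𝒵] [Fintype 𝒰] [Fintype 𝒯]
variable (T : 𝒳 → 𝒯) (r : 𝒳 × 𝒴 × 𝒵 × 𝒰 → ℝ) (p3 : 𝒳 × 𝒴 × 𝒵 → ℝ)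

lemma pr4_zxyu (x y z u) :
    pr r {ω | ω.2.2.1 = z ∧ (ω.1, ω.2.1) = (x, y) ∧ ω.2.2.2 = u} = r (x, y, z, u) := by
  rw [pr_prod4]
  simp [Prod.ext_iff, ite_and, Finset.sum_ite_irrel, Finset.sum_ite_eq, Finset.sum_ite_eq',
    Finset.sum_const_zero]

lemma pr4_xy (x y) :
    pr r {ω | (ω.1, ω.2.1) = (x, y)} = ∑ z, ∑ u, r (x, y, z, u) := by
  rw [pr_prod4]
  simp [Prod.ext_iff, ite_and, Finset.sum_ite_irrel, Finset.sum_ite_eq, Finset.sum_ite_eq',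
    Finset.sum_const_zero]

lemma pr4_zxy (x y z) :
    pr r {ω | ω.2.2.1 = z ∧ (ω.1, ω.2.1) = (x, y)} = ∑ u, r (x, y, z, u) := by
  rw [pr_prod4]
  simp [Prod.ext_iff, ite_and, Finset.sum_ite_irrel, Finset.sum_ite_eq, Finset.sum_ite_eq',
    Finset.sum_const_zero]

lemma pr4_xyu (x y u) :
    pr r {ω | (ω.1, ω.2.1) = (x, y) ∧ ω.2.2.2 = u} = ∑ z, r (x, y, z, u) := by
  rw [pr_prod4]
  simp [Prod.ext_iff, ite_and, Finset.sum_ite_irrel, Finset.sum_ite_eq, Finset.sum_ite_eq',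
    Finset.sum_const_zero]

lemma pr4_u_ty_xyz (u t y x y' z) :
    pr r {ω | ω.2.2.2 = u ∧ (T ω.1, ω.2.1) = (t, y) ∧ (ω.1, ω.2.1, ω.2.2.1) = (x, y', z)}
      = if T x = t ∧ y' = y then r (x, y', z, u) else 0 := by
  rw [pr_prod4]
  simp only [Set.mem_setOf_eq, Prod.mk.injEq]
  by_cases h : T x = t ∧ y' = y
  · obtain ⟨h1, h2⟩ := h
    subst h1; subst h2
    simp [Prod.ext_iff, ite_and, Finset.sum_ite_irrel, Finset.sum_ite_eq, Finset.sum_ite_eq',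
      Finset.sum_const_zero, and_comm, and_left_comm, and_assoc]
  · rw [if_neg h]
    refine Finset.sum_eq_zero fun a _ => Finset.sum_eq_zero fun b _ =>
      Finset.sum_eq_zero fun c _ => Finset.sum_eq_zero fun e _ => ?_
    rw [if_neg]
    rintro ⟨-, ⟨ht, hy⟩, hx, hy', hz⟩
    exact h ⟨by rw [← hx, ht], by rw [← hy', hy]⟩

lemma pr4_ty (t y) :
    pr r {ω | (T ω.1, ω.2.1) = (t, y)}
      = ∑ x, ∑ z, ∑ u, if T x = t then r (x, y, z, u) else 0 := by
  rw [pr_prod4]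
  simp [Prod.ext_iff, ite_and, Finset.sum_ite_irrel, Finset.sum_ite_eq, Finset.sum_ite_eq',
    Finset.sum_const_zero]

lemma pr4_u_ty (u t y) :
    pr r {ω | ω.2.2.2 = u ∧ (T ω.1, ω.2.1) = (t, y)}
      = ∑ x, ∑ z, if T x = t then r (x, y, z, u) else 0 := by
  rw [pr_prod4]
  simp [Prod.ext_iff, ite_and, Finset.sum_ite_irrel, Finset.sum_ite_eq, Finset.sum_ite_eq',
    Finset.sum_const_zero]

lemma pr4_ty_xyz (t y x y' z) :
    pr r {ω | (T ω.1, ω.2.1) = (t, y) ∧ (ω.1, ω.2.1, ω.2.2.1) = (x, y', z)}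
      = if T x = t ∧ y' = y then ∑ u, r (x, y', z, u) else 0 := by
  rw [pr_prod4]
  simp only [Set.mem_setOf_eq, Prod.mk.injEq]
  by_cases h : T x = t ∧ y' = y
  · obtain ⟨h1, h2⟩ := h
    subst h1; subst h2
    simp [Prod.ext_iff, ite_and, Finset.sum_ite_irrel, Finset.sum_ite_eq, Finset.sum_ite_eq',
      Finset.sum_const_zero, and_comm, and_left_comm, and_assoc]
  · rw [if_neg h]
    refine Finset.sum_eq_zero fun a _ => Finset.sum_eq_zero fun b _ =>
      Finset.sum_eq_zero fun c _ => Finset.sum_eq_zero fun e _ => ?_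
    rw [if_neg]
    rintro ⟨⟨ht, hy⟩, hx, hy', hz⟩
    exact h ⟨by rw [← hx, ht], by rw [← hy', hy]⟩

lemma pr4_uxy (u x y) :
    pr r {ω | ω.2.2.2 = u ∧ ω.1 = x ∧ ω.2.1 = y} = ∑ z, r (x, y, z, u) := by
  rw [pr_congr r (t := {ω | (ω.1, ω.2.1) = (x, y) ∧ ω.2.2.2 = u}) fun ω => by
    simp only [Set.mem_setOf_eq, Prod.mk.injEq]; tauto, pr4_xyu]

lemma pr4_xy' (x y) :
    pr r {ω | ω.1 = x ∧ ω.2.1 = y} = ∑ z, ∑ u, r (x, y, z, u) := by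
  rw [pr_congr r (t := {ω | (ω.1, ω.2.1) = (x, y)}) fun ω => by
    simp only [Set.mem_setOf_eq, Prod.mk.injEq], pr4_xy]

lemma pr4_uty' (u t y) :
    pr r {ω | ω.2.2.2 = u ∧ T ω.1 = t ∧ ω.2.1 = y}
      = ∑ x, ∑ z, if T x = t then r (x, y, z, u) else 0 := by
  rw [pr_congr r (t := {ω | ω.2.2.2 = u ∧ (T ω.1, ω.2.1) = (t, y)}) fun ω => by
    simp only [Set.mem_setOf_eq, Prod.mk.injEq], pr4_u_ty]

lemma pr4_ty' (t y) :
    pr r {ω | T ω.1 = t ∧ ω.2.1 = y}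
      = ∑ x, ∑ z, ∑ u, if T x = t then r (x, y, z, u) else 0 := by
  rw [pr_congr r (t := {ω | (T ω.1, ω.2.1) = (t, y)}) fun ω => by
    simp only [Set.mem_setOf_eq, Prod.mk.injEq], pr4_ty]

lemma pr4_tuy (t u y) :
    pr r {ω | T ω.1 = t ∧ ω.2.2.2 = u ∧ ω.2.1 = y}
      = ∑ x, ∑ z, if T x = t then r (x, y, z, u) else 0 := by
  rw [pr_congr r (t := {ω | ω.2.2.2 = u ∧ (T ω.1, ω.2.1) = (t, y)}) fun ω => by
    simp only [Set.mem_setOf_eq, Prod.mk.injEq]; tauto, pr4_u_ty]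

lemma pr3_z_ty_xy (z t y x y') :
    pr p3 {ω | ω.2.2 = z ∧ (T ω.1, ω.2.1) = (t, y) ∧ (ω.1, ω.2.1) = (x, y')}
      = if T x = t ∧ y' = y then p3 (x, y', z) else 0 := by
  rw [pr_prod3]
  simp only [Set.mem_setOf_eq, Prod.mk.injEq]
  by_cases h : T x = t ∧ y' = y
  · obtain ⟨h1, h2⟩ := h
    subst h1; subst h2
    simp [Prod.ext_iff, ite_and, Finset.sum_ite_irrel, Finset.sum_ite_eq, Finset.sum_ite_eq',
      Finset.sum_const_zero, and_comm, and_left_comm, and_assoc]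
  · rw [if_neg h]
    refine Finset.sum_eq_zero fun a _ => Finset.sum_eq_zero fun b _ =>
      Finset.sum_eq_zero fun c _ => ?_
    rw [if_neg]
    rintro ⟨-, ⟨ht, hy⟩, hx, hy'⟩
    exact h ⟨by rw [← hx, ht], by rw [← hy', hy]⟩

lemma pr3_ty (t y) :
    pr p3 {ω | (T ω.1, ω.2.1) = (t, y)}
      = ∑ x, ∑ z, if T x = t then p3 (x, y, z) else 0 := by
  rw [pr_prod3]
  simp [Prod.ext_iff, ite_and, Finset.sum_ite_irrel, Finset.sum_ite_eq, Finset.sum_ite_eq',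
    Finset.sum_const_zero]

lemma pr3_z_ty (z t y) :
    pr p3 {ω | ω.2.2 = z ∧ (T ω.1, ω.2.1) = (t, y)}
      = ∑ x, if T x = t then p3 (x, y, z) else 0 := by
  rw [pr_prod3]
  simp [Prod.ext_iff, ite_and, Finset.sum_ite_irrel, Finset.sum_ite_eq, Finset.sum_ite_eq',
    Finset.sum_const_zero]

lemma pr3_ty_xy (t y x y') :
    pr p3 {ω | (T ω.1, ω.2.1) = (t, y) ∧ (ω.1, ω.2.1) = (x, y')}
      = if T x = t ∧ y' = y then ∑ z, p3 (x, y', z) else 0 := by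
  rw [pr_prod3]
  simp only [Set.mem_setOf_eq, Prod.mk.injEq]
  by_cases h : T x = t ∧ y' = y
  · obtain ⟨h1, h2⟩ := h
    subst h1; subst h2
    simp [Prod.ext_iff, ite_and, Finset.sum_ite_irrel, Finset.sum_ite_eq, Finset.sum_ite_eq',
      Finset.sum_const_zero, and_comm, and_left_comm, and_assoc]
  · rw [if_neg h]
    refine Finset.sum_eq_zero fun a _ => Finset.sum_eq_zero fun b _ =>
      Finset.sum_eq_zero fun c _ => ?_
    rw [if_neg]
    rintro ⟨⟨ht, hy⟩, hx, hy'⟩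
    exact h ⟨by rw [← hx, ht], by rw [← hy', hy]⟩

end Helpers5

section Helpers6
variable {Ω : Type*} [Fintype Ω]
variable {α β γ : Type*} [Fintype α] [Fintype β] [Fintype γ]

lemma condMI_congr (p q : Ω → ℝ) (A : Ω → α) (B : Ω → β) (C : Ω → γ)
    (h : ∀ a b c, pr p {ω | A ω = a ∧ B ω = b ∧ C ω = c}
      = pr q {ω | A ω = a ∧ B ω = b ∧ C ω = c}) :
    condMI p A B C = condMI q A B C := by
  have mAC : ∀ (r : Ω → ℝ) (a : α) (c : γ), pr r {ω | A ω = a ∧ C ω = c}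
      = ∑ b : β, pr r {ω | A ω = a ∧ B ω = b ∧ C ω = c} := by
    intro r a c
    rw [← pr_sum_fiber r B {ω | A ω = a ∧ C ω = c}]
    exact Finset.sum_congr rfl fun b _ => pr_congr r fun ω => by
      simp only [Set.mem_setOf_eq]; tauto
  have mBC : ∀ (r : Ω → ℝ) (b : β) (c : γ), pr r {ω | B ω = b ∧ C ω = c}
      = ∑ a : α, pr r {ω | A ω = a ∧ B ω = b ∧ C ω = c} := by
    intro r b c
    rw [← pr_sum_fiber r A {ω | B ω = b ∧ C ω = c}]
    exact Finset.sum_congr rfl fun a _ => pr_congr r fun ω => by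
      simp only [Set.mem_setOf_eq] <;> tauto
  have mC : ∀ (r : Ω → ℝ) (c : γ), pr r {ω | C ω = c}
      = ∑ a : α, pr r {ω | A ω = a ∧ C ω = c} :=
    fun r c => (pr_sum_fiber r A {ω | C ω = c}).symm
  have hAC : ∀ a c, pr p {ω | A ω = a ∧ C ω = c} = pr q {ω | A ω = a ∧ C ω = c} := by
    intro a c; rw [mAC p, mAC q]
    exact Finset.sum_congr rfl fun b _ => h a b c
  have hBC : ∀ b c, pr p {ω | B ω = b ∧ C ω = c} = pr q {ω | B ω = b ∧ C ω = c} := by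
    intro b c; rw [mBC p, mBC q]
    exact Finset.sum_congr rfl fun a _ => h a b c
  have hC : ∀ c, pr p {ω | C ω = c} = pr q {ω | C ω = c} := by
    intro c; rw [mC p, mC q]
    exact Finset.sum_congr rfl fun a _ => hAC a c
  have hABC' : ∀ (a : α) (bc : β × γ), pr p {ω | A ω = a ∧ (B ω, C ω) = bc}
      = pr q {ω | A ω = a ∧ (B ω, C ω) = bc} := by
    rintro a ⟨b, c⟩
    have e : ∀ ω, ω ∈ {ω | A ω = a ∧ (B ω, C ω) = (b, c)}
        ↔ ω ∈ {ω | A ω = a ∧ B ω = b ∧ C ω = c} := fun ω => by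
      simp [Prod.ext_iff]
    rw [pr_congr p e, pr_congr q e, h]
  have hBC' : ∀ (bc : β × γ), pr p {ω | (B ω, C ω) = bc} = pr q {ω | (B ω, C ω) = bc} := by
    rintro ⟨b, c⟩
    have e : ∀ ω, ω ∈ {ω | (B ω, C ω) = (b, c)}
        ↔ ω ∈ {ω | B ω = b ∧ C ω = c} := fun ω => by simp [Prod.ext_iff]
    rw [pr_congr p e, pr_congr q e, hBC]
  unfold condMI condEnt
  simp only [hAC, hC, hABC', hBC']

end Helpers6
section Construction
variable {𝒳 𝒴 𝒵 𝒰 𝒯 : Type} [Fintype 𝒳] [Fintype 𝒴] [Fintype 𝒵] [Fintype 𝒰] [Fintype 𝒯]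

/-- marginal of `T(X), Y` under `p`. -/
noncomputable def margTY (p : 𝒳 × 𝒴 × 𝒵 → ℝ) (T : 𝒳 → 𝒯) (t : 𝒯) (y : 𝒴) : ℝ :=
  ∑ x, ∑ z, if T x = t then p (x, y, z) else 0

/-- marginal of `T(X), Y, Z` under `p`. -/
noncomputable def margTYZ (p : 𝒳 × 𝒴 × 𝒵 → ℝ) (T : 𝒳 → 𝒯) (t : 𝒯) (y : 𝒴) (z : 𝒵) : ℝ :=
  ∑ x, if T x = t then p (x, y, z) else 0

/-- joint of `T(X), Y, U` under `q`. -/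
noncomputable def jointN (q : 𝒳 × 𝒴 × 𝒵 × 𝒰 → ℝ) (T : 𝒳 → 𝒯) (t : 𝒯) (y : 𝒴) (u : 𝒰) : ℝ :=
  ∑ x, ∑ z, if T x = t then q (x, y, z, u) else 0

/-- conditional distribution of `U` given `T(X), Y`. -/
noncomputable def condW (p : 𝒳 × 𝒴 × 𝒵 → ℝ) (q : 𝒳 × 𝒴 × 𝒵 × 𝒰 → ℝ) (T : 𝒳 → 𝒯)
    (u : 𝒰) (t : 𝒯) (y : 𝒴) : ℝ :=
  if margTY p T t y = 0 then (Fintype.card 𝒰 : ℝ)⁻¹ else jointN q T t y u / margTY p T t y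

/-- the modified joint distribution `p(x,y,z) · w(u | T x, y)`. -/
noncomputable def newQ (p : 𝒳 × 𝒴 × 𝒵 → ℝ) (q : 𝒳 × 𝒴 × 𝒵 × 𝒰 → ℝ) (T : 𝒳 → 𝒯) :
    𝒳 × 𝒴 × 𝒵 × 𝒰 → ℝ :=
  fun ω => p (ω.1, ω.2.1, ω.2.2.1) * condW p q T ω.2.2.2 (T ω.1) ω.2.1

variable (p : 𝒳 × 𝒴 × 𝒵 → ℝ) (q : 𝒳 × 𝒴 × 𝒵 × 𝒰 → ℝ) (T : 𝒳 → 𝒯)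

lemma margTY_nonneg (hp0 : ∀ ω, 0 ≤ p ω) (t : 𝒯) (y : 𝒴) : 0 ≤ margTY p T t y := by
  refine Finset.sum_nonneg fun x _ => Finset.sum_nonneg fun z _ => ?_
  split <;> simp [hp0 (x, y, z)]

lemma margTYZ_nonneg (hp0 : ∀ ω, 0 ≤ p ω) (t : 𝒯) (y : 𝒴) (z : 𝒵) : 0 ≤ margTYZ p T t y z := by
  refine Finset.sum_nonneg fun x _ => ?_
  split <;> simp [hp0 (x, y, z)]

lemma jointN_nonneg (hq0 : ∀ ω, 0 ≤ q ω) (t : 𝒯) (y : 𝒴) (u : 𝒰) : 0 ≤ jointN q T t y u := by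
  refine Finset.sum_nonneg fun x _ => Finset.sum_nonneg fun z _ => ?_
  split <;> simp [hq0 (x, y, z, u)]

lemma condW_nonneg (hp0 : ∀ ω, 0 ≤ p ω) (hq0 : ∀ ω, 0 ≤ q ω) (u : 𝒰) (t : 𝒯) (y : 𝒴) :
    0 ≤ condW p q T u t y := by
  unfold condW
  split
  · positivity
  · exact div_nonneg (jointN_nonneg q T hq0 t y u) (margTY_nonneg p T hp0 t y)

lemma margTY_zero (hp0 : ∀ ω, 0 ≤ p ω) {t : 𝒯} {y : 𝒴} (h : margTY p T t y = 0) :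
    ∀ x z, T x = t → p (x, y, z) = 0 := by
  intro x z hx
  have h1 : ∀ x' ∈ Finset.univ (α := 𝒳), (0:ℝ) ≤ ∑ z', if T x' = t then p (x', y, z') else 0 :=
    fun x' _ => Finset.sum_nonneg fun z' _ => by split <;> simp [hp0 (x', y, z')]
  have h2 := (Finset.sum_eq_zero_iff_of_nonneg h1).mp h x (Finset.mem_univ x)
  have h3 : ∀ z' ∈ Finset.univ (α := 𝒵), (0:ℝ) ≤ if T x = t then p (x, y, z') else 0 :=
    fun z' _ => by split <;> simp [hp0 (x, y, z')]
  have h4 := (Finset.sum_eq_zero_iff_of_nonneg h3).mp h2 z (Finset.mem_univ z)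
  rwa [if_pos hx] at h4

lemma sum_condW (h𝒰 : Nonempty 𝒰) (hq0 : ∀ ω, 0 ≤ q ω)
    (hmarg : ∀ x y z, (∑ u, q (x, y, z, u)) = p (x, y, z)) (t : 𝒯) (y : 𝒴) :
    ∑ u, condW p q T u t y = 1 := by
  unfold condW
  by_cases h : margTY p T t y = 0
  · simp only [h, if_true]
    rw [Finset.sum_const, nsmul_eq_mul, Finset.card_univ, mul_inv_cancel₀]
    exact_mod_cast Fintype.card_ne_zero
  · simp only [h, if_false]
    rw [← Finset.sum_div, div_eq_one_iff_eq h]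
    unfold jointN margTY
    rw [Finset.sum_comm]
    refine Finset.sum_congr rfl fun x _ => ?_
    rw [Finset.sum_comm]
    refine Finset.sum_congr rfl fun z _ => ?_
    rw [Finset.sum_ite_irrel, Finset.sum_const_zero, hmarg]

lemma newQ_sum_u (h𝒰 : Nonempty 𝒰) (hq0 : ∀ ω, 0 ≤ q ω)
    (hmarg : ∀ x y z, (∑ u, q (x, y, z, u)) = p (x, y, z)) (x : 𝒳) (y : 𝒴) (z : 𝒵) :
    (∑ u, newQ p q T (x, y, z, u)) = p (x, y, z) := by
  have e : ∀ u, newQ p q T (x, y, z, u) = p (x, y, z) * condW p q T u (T x) y := fun u => rfl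
  simp only [e]
  rw [← Finset.mul_sum, sum_condW p q T h𝒰 hq0 hmarg, mul_one]

end Construction
section Construction2
variable {𝒳 𝒴 𝒵 𝒰 𝒯 : Type} [Fintype 𝒳] [Fintype 𝒴] [Fintype 𝒵] [Fintype 𝒰] [Fintype 𝒯]

lemma sum_prod4 (F : 𝒳 × 𝒴 × 𝒵 × 𝒰 → ℝ) :
    ∑ ω, F ω = ∑ x, ∑ y, ∑ z, ∑ u, F (x, y, z, u) := by
  rw [Fintype.sum_prod_type]
  exact Finset.sum_congr rfl fun x _ => by
    rw [Fintype.sum_prod_type]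
    exact Finset.sum_congr rfl fun y _ => by rw [Fintype.sum_prod_type]

lemma sum_prod3 (F : 𝒳 × 𝒴 × 𝒵 → ℝ) :
    ∑ ω, F ω = ∑ x, ∑ y, ∑ z, F (x, y, z) := by
  rw [Fintype.sum_prod_type]
  exact Finset.sum_congr rfl fun x _ => by rw [Fintype.sum_prod_type]

lemma sum_fiberwise_plain (T : 𝒳 → 𝒯) (g : 𝒳 → ℝ) :
    ∑ t : 𝒯, ∑ x, (if T x = t then g x else 0) = ∑ x, g x := by
  rw [Finset.sum_comm]
  exact Finset.sum_congr rfl fun x _ => by simp [Finset.sum_ite_eq]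

variable (p : 𝒳 × 𝒴 × 𝒵 → ℝ) (q : 𝒳 × 𝒴 × 𝒵 × 𝒰 → ℝ) (T : 𝒳 → 𝒯)

/-- `Eq1`: from the Markov chain `Z – (X,Y) – U` under `q`. -/
lemma eq1 (hmarg : ∀ x y z, (∑ u, q (x, y, z, u)) = p (x, y, z))
    (hmk1 : MarkovChain q (fun ω => ω.2.2.1) (fun ω => (ω.1, ω.2.1)) (fun ω => ω.2.2.2))
    (x : 𝒳) (y : 𝒴) (z : 𝒵) (u : 𝒰) :
    q (x, y, z, u) * (∑ z', p (x, y, z')) = p (x, y, z) * (∑ z', q (x, y, z', u)) := by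
  have h := hmk1 z (x, y) u
  rw [pr4_zxyu, pr4_xy, pr4_zxy, pr4_xyu] at h
  have e : (∑ z', ∑ u', q (x, y, z', u')) = ∑ z', p (x, y, z') :=
    Finset.sum_congr rfl fun z' _ => hmarg x y z'
  rw [e, hmarg x y z] at h
  exact h

/-- `Eq2`: from the sufficiency Markov chain `Z – (T(X),Y) – (X,Y)` under `p`. -/
lemma eq2 (hsuff : MarkovChain p (fun ω => ω.2.2) (fun ω => (T ω.1, ω.2.1))
      (fun ω => (ω.1, ω.2.1)))
    (x : 𝒳) (y : 𝒴) (z : 𝒵) :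
    p (x, y, z) * margTY p T (T x) y = margTYZ p T (T x) y z * (∑ z', p (x, y, z')) := by
  have h := hsuff z (T x, y) (x, y)
  rw [pr3_z_ty_xy, pr3_ty, pr3_z_ty, pr3_ty_xy] at h
  simp only [and_self, if_true, if_pos rfl] at h
  unfold margTY margTYZ
  simpa using h

lemma q_le_p (hq0 : ∀ ω, 0 ≤ q ω)
    (hmarg : ∀ x y z, (∑ u, q (x, y, z, u)) = p (x, y, z))
    (x : 𝒳) (y : 𝒴) (z : 𝒵) (u : 𝒰) : q (x, y, z, u) ≤ p (x, y, z) := by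
  rw [← hmarg x y z]
  exact Finset.single_le_sum (fun u' _ => hq0 (x, y, z, u')) (Finset.mem_univ u)

/-- `Eq3`: combined identity `q(x,y,z,u)·m(Tx,y) = mz(Tx,y,z)·qU(x,y,u)`. -/
lemma eq3 (hp0 : ∀ ω, 0 ≤ p ω) (hq0 : ∀ ω, 0 ≤ q ω)
    (hmarg : ∀ x y z, (∑ u, q (x, y, z, u)) = p (x, y, z))
    (hmk1 : MarkovChain q (fun ω => ω.2.2.1) (fun ω => (ω.1, ω.2.1)) (fun ω => ω.2.2.2))
    (hsuff : MarkovChain p (fun ω => ω.2.2) (fun ω => (T ω.1, ω.2.1))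
      (fun ω => (ω.1, ω.2.1)))
    (x : 𝒳) (y : 𝒴) (z : 𝒵) (u : 𝒰) :
    q (x, y, z, u) * margTY p T (T x) y
      = margTYZ p T (T x) y z * (∑ z', q (x, y, z', u)) := by
  by_cases hS : (∑ z', p (x, y, z')) = 0
  · have hpz : ∀ z', p (x, y, z') = 0 := by
      intro z'
      have := (Finset.sum_eq_zero_iff_of_nonneg
        (fun z'' _ => hp0 (x, y, z''))).mp hS z' (Finset.mem_univ z')
      exact this
    have hqz : ∀ z' u', q (x, y, z', u') = 0 := fun z' u' =>
      le_antisymm ((q_le_p p q hq0 hmarg x y z' u').trans (hpz z').le) (hq0 _)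
    rw [hqz z u, zero_mul]
    rw [Finset.sum_eq_zero fun z' _ => hqz z' u, mul_zero]
  · apply mul_right_cancel₀ hS
    calc q (x, y, z, u) * margTY p T (T x) y * (∑ z', p (x, y, z'))
        = (q (x, y, z, u) * (∑ z', p (x, y, z'))) * margTY p T (T x) y := by ring
      _ = (p (x, y, z) * (∑ z', q (x, y, z', u))) * margTY p T (T x) y := by
          rw [eq1 p q hmarg hmk1]
      _ = (∑ z', q (x, y, z', u)) * (p (x, y, z) * margTY p T (T x) y) := by ring
      _ = (∑ z', q (x, y, z', u)) * (margTYZ p T (T x) y z * (∑ z', p (x, y, z'))) := by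
          rw [eq2 p T hsuff]
      _ = margTYZ p T (T x) y z * (∑ z', q (x, y, z', u)) * (∑ z', p (x, y, z')) := by ring

/-- key fiber identity `B5`. -/
lemma fiber_q (hp0 : ∀ ω, 0 ≤ p ω) (hq0 : ∀ ω, 0 ≤ q ω)
    (hmarg : ∀ x y z, (∑ u, q (x, y, z, u)) = p (x, y, z))
    (hmk1 : MarkovChain q (fun ω => ω.2.2.1) (fun ω => (ω.1, ω.2.1)) (fun ω => ω.2.2.2))
    (hsuff : MarkovChain p (fun ω => ω.2.2) (fun ω => (T ω.1, ω.2.1))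
      (fun ω => (ω.1, ω.2.1)))
    (t : 𝒯) (y : 𝒴) (z : 𝒵) (u : 𝒰) :
    (∑ x, if T x = t then q (x, y, z, u) else 0)
      = margTYZ p T t y z * condW p q T u t y := by
  by_cases hm : margTY p T t y = 0
  · have h1 : (∑ x, if T x = t then q (x, y, z, u) else 0) = 0 := by
      refine Finset.sum_eq_zero fun x _ => ?_
      split
      · next hx => exact le_antisymm ((q_le_p p q hq0 hmarg x y z u).trans
          (margTY_zero p T hp0 hm x z hx).le) (hq0 _)
      · rfl
    have h2 : margTYZ p T t y z = 0 := by
      refine Finset.sum_eq_zero fun x _ => ?_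
      split
      · next hx => exact margTY_zero p T hp0 hm x z hx
      · rfl
    rw [h1, h2, zero_mul]
  · have hw : condW p q T u t y = jointN q T t y u / margTY p T t y := by
      unfold condW; rw [if_neg hm]
    rw [hw, mul_div_assoc', eq_div_iff hm]
    have step : ∀ x, (if T x = t then q (x, y, z, u) else 0) * margTY p T t y
        = if T x = t then margTYZ p T t y z * (∑ z', q (x, y, z', u)) else 0 := by
      intro x
      split
      · next hx =>
          rw [← hx]
          exact eq3 p q T hp0 hq0 hmarg hmk1 hsuff x y z u
      · rw [zero_mul]
    rw [Finset.sum_mul]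
    simp only [step]
    have e2 : (∑ x, if T x = t then margTYZ p T t y z * (∑ z', q (x, y, z', u)) else 0)
        = margTYZ p T t y z * ∑ x, if T x = t then (∑ z', q (x, y, z', u)) else 0 := by
      rw [Finset.mul_sum]
      exact Finset.sum_congr rfl fun x _ => by split <;> simp
    rw [e2]
    congr 1
    unfold jointN
    exact Finset.sum_congr rfl fun x _ => by
      rw [Finset.sum_ite_irrel, Finset.sum_const_zero]

/-- fiber identity for `newQ` (`B6`). -/
lemma fiber_newQ (h𝒰 : Nonempty 𝒰) (t : 𝒯) (y : 𝒴) (z : 𝒵) (u : 𝒰) :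
    (∑ x, if T x = t then newQ p q T (x, y, z, u) else 0)
      = margTYZ p T t y z * condW p q T u t y := by
  have step : ∀ x, (if T x = t then newQ p q T (x, y, z, u) else 0)
      = (if T x = t then p (x, y, z) else 0) * condW p q T u t y := by
    intro x
    split
    · next hx => show p (x, y, z) * condW p q T u (T x) y = _; rw [hx]
    · rw [zero_mul]
  simp only [step]
  rw [← Finset.sum_mul]
  rfl

lemma fiber_eq (h𝒰 : Nonempty 𝒰) (hp0 : ∀ ω, 0 ≤ p ω) (hq0 : ∀ ω, 0 ≤ q ω)
    (hmarg : ∀ x y z, (∑ u, q (x, y, z, u)) = p (x, y, z))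
    (hmk1 : MarkovChain q (fun ω => ω.2.2.1) (fun ω => (ω.1, ω.2.1)) (fun ω => ω.2.2.2))
    (hsuff : MarkovChain p (fun ω => ω.2.2) (fun ω => (T ω.1, ω.2.1))
      (fun ω => (ω.1, ω.2.1)))
    (t : 𝒯) (y : 𝒴) (z : 𝒵) (u : 𝒰) :
    (∑ x, if T x = t then newQ p q T (x, y, z, u) else 0)
      = ∑ x, if T x = t then q (x, y, z, u) else 0 := by
  rw [fiber_newQ p q T h𝒰, fiber_q p q T hp0 hq0 hmarg hmk1 hsuff]

lemma sum_x_eq (h𝒰 : Nonempty 𝒰) (hp0 : ∀ ω, 0 ≤ p ω) (hq0 : ∀ ω, 0 ≤ q ω)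
    (hmarg : ∀ x y z, (∑ u, q (x, y, z, u)) = p (x, y, z))
    (hmk1 : MarkovChain q (fun ω => ω.2.2.1) (fun ω => (ω.1, ω.2.1)) (fun ω => ω.2.2.2))
    (hsuff : MarkovChain p (fun ω => ω.2.2) (fun ω => (T ω.1, ω.2.1))
      (fun ω => (ω.1, ω.2.1)))
    (y : 𝒴) (z : 𝒵) (u : 𝒰) :
    (∑ x, newQ p q T (x, y, z, u)) = ∑ x, q (x, y, z, u) := by
  rw [← sum_fiberwise_plain T (fun x => newQ p q T (x, y, z, u)),
    ← sum_fiberwise_plain T (fun x => q (x, y, z, u))]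
  exact Finset.sum_congr rfl fun t _ => fiber_eq p q T h𝒰 hp0 hq0 hmarg hmk1 hsuff t y z u

end Construction2
section Construction3
variable {𝒳 𝒴 𝒵 𝒰 𝒯 𝒵' : Type} [Fintype 𝒳] [Fintype 𝒴] [Fintype 𝒵] [Fintype 𝒰] [Fintype 𝒯]
  [Fintype 𝒵']
variable (p : 𝒳 × 𝒴 × 𝒵 → ℝ) (q : 𝒳 × 𝒴 × 𝒵 × 𝒰 → ℝ) (T : 𝒳 → 𝒯)

lemma newQ_nonneg (hp0 : ∀ ω, 0 ≤ p ω) (hq0 : ∀ ω, 0 ≤ q ω) (ω : 𝒳 × 𝒴 × 𝒵 × 𝒰) :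
    0 ≤ newQ p q T ω :=
  mul_nonneg (hp0 _) (condW_nonneg p q T hp0 hq0 _ _ _)

lemma newQ_isPMF (h𝒰 : Nonempty 𝒰) (hp : IsPMF p) (hq0 : ∀ ω, 0 ≤ q ω)
    (hmarg : ∀ x y z, (∑ u, q (x, y, z, u)) = p (x, y, z)) :
    IsPMF (newQ p q T) := by
  refine ⟨newQ_nonneg p q T hp.1 hq0, ?_⟩
  rw [sum_prod4]
  have e : ∀ (x : 𝒳) (y : 𝒴) (z : 𝒵), (∑ u, newQ p q T (x, y, z, u)) = p (x, y, z) :=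
    newQ_sum_u p q T h𝒰 hq0 hmarg
  simp only [e]
  rw [← sum_prod3]
  exact hp.2

lemma pr_newQ_ty (h𝒰 : Nonempty 𝒰) (hq0 : ∀ ω, 0 ≤ q ω)
    (hmarg : ∀ x y z, (∑ u, q (x, y, z, u)) = p (x, y, z)) (t : 𝒯) (y : 𝒴) :
    pr (newQ p q T) {ω | (T ω.1, ω.2.1) = (t, y)} = margTY p T t y := by
  rw [pr4_ty]
  unfold margTY
  refine Finset.sum_congr rfl fun x _ => Finset.sum_congr rfl fun z _ => ?_
  rw [Finset.sum_ite_irrel, Finset.sum_const_zero, newQ_sum_u p q T h𝒰 hq0 hmarg]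

lemma pr_newQ_u_ty (u : 𝒰) (t : 𝒯) (y : 𝒴) :
    pr (newQ p q T) {ω | ω.2.2.2 = u ∧ (T ω.1, ω.2.1) = (t, y)}
      = margTY p T t y * condW p q T u t y := by
  rw [pr4_u_ty]
  have step : ∀ (x : 𝒳) (z : 𝒵), (if T x = t then newQ p q T (x, y, z, u) else 0)
      = (if T x = t then p (x, y, z) else 0) * condW p q T u t y := by
    intro x z
    split
    · next hx => show p (x, y, z) * condW p q T u (T x) y = _; rw [hx]
    · rw [zero_mul]
  simp only [step]
  have e : ∀ x, (∑ z, (if T x = t then p (x, y, z) else 0) * condW p q T u t y)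
      = (∑ z, if T x = t then p (x, y, z) else 0) * condW p q T u t y :=
    fun x => (Finset.sum_mul _ _ _).symm
  simp only [e]
  rw [← Finset.sum_mul]
  rfl

lemma newQ_markov2 (h𝒰 : Nonempty 𝒰) (hq0 : ∀ ω, 0 ≤ q ω)
    (hmarg : ∀ x y z, (∑ u, q (x, y, z, u)) = p (x, y, z)) :
    MarkovChain (newQ p q T) (fun ω => ω.2.2.2) (fun ω => (T ω.1, ω.2.1))
      (fun ω => (ω.1, ω.2.1, ω.2.2.1)) := by
  rintro u ⟨t, y⟩ ⟨x, y', z⟩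
  rw [pr4_u_ty_xyz, pr4_ty_xyz, pr_newQ_ty p q T h𝒰 hq0 hmarg, pr_newQ_u_ty]
  by_cases hc : T x = t ∧ y' = y
  · rw [if_pos hc, if_pos hc]
    obtain ⟨h1, h2⟩ := hc
    subst h1; subst h2
    have e1 : newQ p q T (x, y', z, u) = p (x, y', z) * condW p q T u (T x) y' := rfl
    have e2 : (∑ u', newQ p q T (x, y', z, u')) = p (x, y', z) :=
      newQ_sum_u p q T h𝒰 hq0 hmarg x y' z
    rw [e1, e2]
    ring
  · rw [if_neg hc, if_neg hc, zero_mul, mul_zero]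

lemma newQ_dist (d : 𝒵 → 𝒵' → ℝ) (f : 𝒰 → 𝒴 → 𝒵')
    (h𝒰 : Nonempty 𝒰) (hp0 : ∀ ω, 0 ≤ p ω) (hq0 : ∀ ω, 0 ≤ q ω)
    (hmarg : ∀ x y z, (∑ u, q (x, y, z, u)) = p (x, y, z))
    (hmk1 : MarkovChain q (fun ω => ω.2.2.1) (fun ω => (ω.1, ω.2.1)) (fun ω => ω.2.2.2))
    (hsuff : MarkovChain p (fun ω => ω.2.2) (fun ω => (T ω.1, ω.2.1))
      (fun ω => (ω.1, ω.2.1))) :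
    (∑ ω, newQ p q T ω * d ω.2.2.1 (f ω.2.2.2 ω.2.1))
      = ∑ ω, q ω * d ω.2.2.1 (f ω.2.2.2 ω.2.1) := by
  rw [sum_prod4, sum_prod4 (fun ω => q ω * d ω.2.2.1 (f ω.2.2.2 ω.2.1))]
  have swap : ∀ (F : 𝒳 → 𝒴 → 𝒵 → 𝒰 → ℝ),
      (∑ x, ∑ y, ∑ z, ∑ u, F x y z u) = ∑ y, ∑ z, ∑ u, ∑ x, F x y z u := by
    intro F
    rw [Finset.sum_comm]
    refine Finset.sum_congr rfl fun y _ => ?_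
    rw [Finset.sum_comm]
    refine Finset.sum_congr rfl fun z _ => ?_
    rw [Finset.sum_comm]
  rw [swap (fun x y z u => newQ p q T (x, y, z, u) * d z (f u y)),
    swap (fun x y z u => q (x, y, z, u) * d z (f u y))]
  refine Finset.sum_congr rfl fun y _ => Finset.sum_congr rfl fun z _ =>
    Finset.sum_congr rfl fun u _ => ?_
  rw [← Finset.sum_mul, ← Finset.sum_mul,
    sum_x_eq p q T h𝒰 hp0 hq0 hmarg hmk1 hsuff y z u]

lemma newQ_joint_tuy (h𝒰 : Nonempty 𝒰) (hp0 : ∀ ω, 0 ≤ p ω) (hq0 : ∀ ω, 0 ≤ q ω)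
    (hmarg : ∀ x y z, (∑ u, q (x, y, z, u)) = p (x, y, z))
    (hmk1 : MarkovChain q (fun ω => ω.2.2.1) (fun ω => (ω.1, ω.2.1)) (fun ω => ω.2.2.2))
    (hsuff : MarkovChain p (fun ω => ω.2.2) (fun ω => (T ω.1, ω.2.1))
      (fun ω => (ω.1, ω.2.1)))
    (t : 𝒯) (u : 𝒰) (y : 𝒴) :
    pr (newQ p q T) {ω | T ω.1 = t ∧ ω.2.2.2 = u ∧ ω.2.1 = y}
      = pr q {ω | T ω.1 = t ∧ ω.2.2.2 = u ∧ ω.2.1 = y} := by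
  rw [pr4_tuy, pr4_tuy, Finset.sum_comm,
    Finset.sum_comm (γ := 𝒳) (f := fun x z => if T x = t then q (x, y, z, u) else 0)]
  exact Finset.sum_congr rfl fun z _ => fiber_eq p q T h𝒰 hp0 hq0 hmarg hmk1 hsuff t y z u

lemma newQ_rate (h𝒰 : Nonempty 𝒰) (hp0 : ∀ ω, 0 ≤ p ω) (hq : IsPMF q)
    (hmarg : ∀ x y z, (∑ u, q (x, y, z, u)) = p (x, y, z))
    (hmk1 : MarkovChain q (fun ω => ω.2.2.1) (fun ω => (ω.1, ω.2.1)) (fun ω => ω.2.2.2))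
    (hsuff : MarkovChain p (fun ω => ω.2.2) (fun ω => (T ω.1, ω.2.1))
      (fun ω => (ω.1, ω.2.1))) :
    condMI (newQ p q T) (fun ω => T ω.1) (fun ω => ω.2.2.2) (fun ω => ω.2.1)
      ≤ condMI q (fun ω => ω.1) (fun ω => ω.2.2.2) (fun ω => ω.2.1) := by
  have e1 : condMI (newQ p q T) (fun ω => T ω.1) (fun ω => ω.2.2.2) (fun ω => ω.2.1)
      = condMI q (fun ω => T ω.1) (fun ω => ω.2.2.2) (fun ω => ω.2.1) :=
    condMI_congr _ _ _ _ _ fun t u y =>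
      newQ_joint_tuy p q T h𝒰 hp0 hq.1 hmarg hmk1 hsuff t u y
  have e2 : condMI q (fun ω => T ω.1) (fun ω => ω.2.2.2) (fun ω => ω.2.1)
      = condMI q (fun ω => ω.2.2.2) (fun ω => T ω.1) (fun ω => ω.2.1) :=
    condMI_symm q hq.1 _ _ _
  have e3 : condMI q (fun ω => ω.2.2.2) (fun ω => T ω.1) (fun ω => ω.2.1)
      ≤ condMI q (fun ω => ω.2.2.2) (fun ω => ω.1) (fun ω => ω.2.1) :=
    condMI_data_processing q hq (fun ω => ω.2.2.2) (fun ω => ω.1) (fun ω => ω.2.1) T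
  have e4 : condMI q (fun ω => ω.2.2.2) (fun ω => ω.1) (fun ω => ω.2.1)
      = condMI q (fun ω => ω.1) (fun ω => ω.2.2.2) (fun ω => ω.2.1) :=
    (condMI_symm q hq.1 _ _ _).symm
  rw [e1, e2, ← e4]
  exact e3

end Construction3
section DirectionA
variable {𝒳 𝒴 𝒵 𝒰 𝒯 : Type} [Fintype 𝒳] [Fintype 𝒴] [Fintype 𝒵] [Fintype 𝒰] [Fintype 𝒯]
variable (q : 𝒳 × 𝒴 × 𝒵 × 𝒰 → ℝ) (T : 𝒳 → 𝒯)

lemma nonempty_of_pmf (hq : IsPMF q) : Nonempty 𝒰 := by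
  by_contra h
  have : IsEmpty 𝒰 := not_nonempty_iff.mp h
  have h2 := hq.2
  rw [sum_prod4] at h2
  simp at h2

lemma dirA_E (hmk2 : MarkovChain q (fun ω => ω.2.2.2) (fun ω => (T ω.1, ω.2.1))
      (fun ω => (ω.1, ω.2.1, ω.2.2.1)))
    (x : 𝒳) (y : 𝒴) (z : 𝒵) (u : 𝒰) :
    q (x, y, z, u) * (∑ x', ∑ z', ∑ u', if T x' = T x then q (x', y, z', u') else 0)
      = (∑ x', ∑ z', if T x' = T x then q (x', y, z', u) else 0)
        * (∑ u', q (x, y, z, u')) := by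
  have h := hmk2 u (T x, y) (x, y, z)
  rw [pr4_u_ty_xyz, pr4_ty, pr4_u_ty, pr4_ty_xyz] at h
  simpa using h

lemma dirA_E' (hmk2 : MarkovChain q (fun ω => ω.2.2.2) (fun ω => (T ω.1, ω.2.1))
      (fun ω => (ω.1, ω.2.1, ω.2.2.1)))
    (x : 𝒳) (y : 𝒴) (u : 𝒰) :
    (∑ z, q (x, y, z, u)) * (∑ x', ∑ z', ∑ u', if T x' = T x then q (x', y, z', u') else 0)
      = (∑ x', ∑ z', if T x' = T x then q (x', y, z', u) else 0)
        * (∑ z, ∑ u', q (x, y, z, u')) := by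
  rw [Finset.sum_mul]
  have e : ∀ z, q (x, y, z, u) * (∑ x', ∑ z', ∑ u', if T x' = T x then q (x', y, z', u') else 0)
      = (∑ x', ∑ z', if T x' = T x then q (x', y, z', u) else 0) * (∑ u', q (x, y, z, u')) :=
    fun z => dirA_E q T hmk2 x y z u
  simp only [e]
  rw [← Finset.mul_sum]

lemma dirA_markov1 (hq : IsPMF q)
    (hmk2 : MarkovChain q (fun ω => ω.2.2.2) (fun ω => (T ω.1, ω.2.1))
      (fun ω => (ω.1, ω.2.1, ω.2.2.1))) :
    MarkovChain q (fun ω => ω.2.2.1) (fun ω => (ω.1, ω.2.1)) (fun ω => ω.2.2.2) := by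
  rintro z ⟨x, y⟩ u
  rw [pr4_zxyu, pr4_xy, pr4_zxy, pr4_xyu]
  have hq0 := hq.1
  set A := ∑ x', ∑ z', ∑ u', if T x' = T x then q (x', y, z', u') else 0 with hA
  have hA0 : 0 ≤ A := by
    refine Finset.sum_nonneg fun x' _ => Finset.sum_nonneg fun z' _ =>
      Finset.sum_nonneg fun u' _ => ?_
    split <;> simp [hq0 (x', y, z', u')]
  rcases eq_or_lt_of_le hA0 with h | h
  · have hbound : (∑ z', ∑ u', q (x, y, z', u')) ≤ A := by
      have e : (∑ z', ∑ u', q (x, y, z', u'))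
          = ∑ z', ∑ u', if T x = T x then q (x, y, z', u') else 0 := by simp
      rw [e, hA]
      exact Finset.single_le_sum
        (f := fun x' => ∑ z', ∑ u', if T x' = T x then q (x', y, z', u') else 0)
        (fun x' _ => Finset.sum_nonneg fun z' _ => Finset.sum_nonneg fun u' _ => by
          split <;> simp [hq0 (x', y, z', u')]) (Finset.mem_univ x)
    have hall : ∀ z' u', q (x, y, z', u') = 0 := by
      intro z' u'
      have h1 : q (x, y, z', u') ≤ ∑ u'', q (x, y, z', u'') :=
        Finset.single_le_sum (fun i _ => hq0 (x, y, z', i)) (Finset.mem_univ u')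
      have h2 : (∑ u'', q (x, y, z', u'')) ≤ ∑ z'', ∑ u'', q (x, y, z'', u'') :=
        Finset.single_le_sum (f := fun z'' => ∑ u'', q (x, y, z'', u''))
          (fun i _ => Finset.sum_nonneg fun j _ => hq0 (x, y, i, j)) (Finset.mem_univ z')
      exact le_antisymm (by linarith [h1, h2, hbound]) (hq0 _)
    rw [hall z u, zero_mul, Finset.sum_eq_zero fun u' _ => hall z u', zero_mul]
  · apply mul_right_cancel₀ h.ne'
    have h1 := dirA_E q T hmk2 x y z u
    have h2 := dirA_E' q T hmk2 x y u
    rw [← hA] at h1 h2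
    calc q (x, y, z, u) * (∑ z', ∑ u', q (x, y, z', u')) * A
        = (q (x, y, z, u) * A) * (∑ z', ∑ u', q (x, y, z', u')) := by ring
      _ = ((∑ x', ∑ z', if T x' = T x then q (x', y, z', u) else 0)
            * (∑ u', q (x, y, z, u'))) * (∑ z', ∑ u', q (x, y, z', u')) := by rw [h1]
      _ = (∑ u', q (x, y, z, u')) * ((∑ x', ∑ z', if T x' = T x then q (x', y, z', u) else 0)
            * (∑ z', ∑ u', q (x, y, z', u'))) := by ring
      _ = (∑ u', q (x, y, z, u')) * ((∑ z', q (x, y, z', u)) * A) := by rw [← h2]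
      _ = (∑ u', q (x, y, z, u')) * (∑ z', q (x, y, z', u)) * A := by ring

lemma dirA_rate (hq : IsPMF q)
    (hmk2 : MarkovChain q (fun ω => ω.2.2.2) (fun ω => (T ω.1, ω.2.1))
      (fun ω => (ω.1, ω.2.1, ω.2.2.1))) :
    condMI q (fun ω => T ω.1) (fun ω => ω.2.2.2) (fun ω => ω.2.1)
      = condMI q (fun ω => ω.1) (fun ω => ω.2.2.2) (fun ω => ω.2.1) := by
  have hq0 := hq.1
  have hm : ∀ (u : 𝒰) (x : 𝒳) (y : 𝒴),
      pr q {ω | ω.2.2.2 = u ∧ ω.1 = x ∧ ω.2.1 = y} * pr q {ω | T ω.1 = T x ∧ ω.2.1 = y}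
        = pr q {ω | ω.2.2.2 = u ∧ T ω.1 = T x ∧ ω.2.1 = y}
          * pr q {ω | ω.1 = x ∧ ω.2.1 = y} := by
    intro u x y
    rw [pr4_uxy, pr4_ty', pr4_uty', pr4_xy']
    exact dirA_E' q T hmk2 x y u
  calc condMI q (fun ω => T ω.1) (fun ω => ω.2.2.2) (fun ω => ω.2.1)
      = condMI q (fun ω => ω.2.2.2) (fun ω => T ω.1) (fun ω => ω.2.1) :=
        condMI_symm q hq0 _ _ _
    _ = condMI q (fun ω => ω.2.2.2) (fun ω => ω.1) (fun ω => ω.2.1) :=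
        condMI_eq_of_markov q hq0 (fun ω => ω.2.2.2) (fun ω => ω.1) (fun ω => ω.2.1) T hm
    _ = condMI q (fun ω => ω.1) (fun ω => ω.2.2.2) (fun ω => ω.2.1) :=
        (condMI_symm q hq0 _ _ _).symm

end DirectionA

/-- Theorem 7: if `T(X)` is conditionally sufficient for the remote source `Z` given `Y`
(Markov chain `Z – (T(X), Y) – (X, Y)`), then the remote rate-distortion function with encoder
observation `(X, Y)` and decoder side information `Y` equals the one with encoder
observation `(T(X), Y)`. -/
theorem remote_rate_distortion_sufficient_statistic
    {𝒳 𝒴 𝒵 𝒵' 𝒯 : Type} [Fintype 𝒳] [Fintype 𝒴] [Fintype 𝒵] [Fintype 𝒵'] [Fintype 𝒯]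
    (p : 𝒳 × 𝒴 × 𝒵 → ℝ) (hp : IsPMF p)
    (d : 𝒵 → 𝒵' → ℝ) (hd : ∀ z z', 0 ≤ d z z') (D : ℝ) (hD : 0 ≤ D)
    (T : 𝒳 → 𝒯)
    (hsuff : MarkovChain p (fun ω => ω.2.2) (fun ω => (T ω.1, ω.2.1))
      (fun ω => (ω.1, ω.2.1))) :
    sInf {r : ℝ | ∃ (𝒰 : Type) (_ : Fintype 𝒰) (q : 𝒳 × 𝒴 × 𝒵 × 𝒰 → ℝ)
        (f : 𝒰 → 𝒴 → 𝒵'),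
        IsPMF q ∧ (∀ x y z, (∑ u, q (x, y, z, u)) = p (x, y, z)) ∧
        MarkovChain q (fun ω => ω.2.2.1) (fun ω => (ω.1, ω.2.1)) (fun ω => ω.2.2.2) ∧
        (∑ ω, q ω * d ω.2.2.1 (f ω.2.2.2 ω.2.1)) ≤ D ∧
        r = condMI q (fun ω => ω.1) (fun ω => ω.2.2.2) (fun ω => ω.2.1)} =
      sInf {r : ℝ | ∃ (𝒰 : Type) (_ : Fintype 𝒰) (q : 𝒳 × 𝒴 × 𝒵 × 𝒰 → ℝ)
        (f : 𝒰 → 𝒴 → 𝒵'),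
        IsPMF q ∧ (∀ x y z, (∑ u, q (x, y, z, u)) = p (x, y, z)) ∧
        MarkovChain q (fun ω => ω.2.2.2) (fun ω => (T ω.1, ω.2.1))
          (fun ω => (ω.1, ω.2.1, ω.2.2.1)) ∧
        (∑ ω, q ω * d ω.2.2.1 (f ω.2.2.2 ω.2.1)) ≤ D ∧
        r = condMI q (fun ω => T ω.1) (fun ω => ω.2.2.2) (fun ω => ω.2.1)} := by
  have hp0 := hp.1
  set S1 := {r : ℝ | ∃ (𝒰 : Type) (_ : Fintype 𝒰) (q : 𝒳 × 𝒴 × 𝒵 × 𝒰 → ℝ)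
        (f : 𝒰 → 𝒴 → 𝒵'),
        IsPMF q ∧ (∀ x y z, (∑ u, q (x, y, z, u)) = p (x, y, z)) ∧
        MarkovChain q (fun ω => ω.2.2.1) (fun ω => (ω.1, ω.2.1)) (fun ω => ω.2.2.2) ∧
        (∑ ω, q ω * d ω.2.2.1 (f ω.2.2.2 ω.2.1)) ≤ D ∧
        r = condMI q (fun ω => ω.1) (fun ω => ω.2.2.2) (fun ω => ω.2.1)} with hS1
  set S2 := {r : ℝ | ∃ (𝒰 : Type) (_ : Fintype 𝒰) (q : 𝒳 × 𝒴 × 𝒵 × 𝒰 → ℝ)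
        (f : 𝒰 → 𝒴 → 𝒵'),
        IsPMF q ∧ (∀ x y z, (∑ u, q (x, y, z, u)) = p (x, y, z)) ∧
        MarkovChain q (fun ω => ω.2.2.2) (fun ω => (T ω.1, ω.2.1))
          (fun ω => (ω.1, ω.2.1, ω.2.2.1)) ∧
        (∑ ω, q ω * d ω.2.2.1 (f ω.2.2.2 ω.2.1)) ≤ D ∧
        r = condMI q (fun ω => T ω.1) (fun ω => ω.2.2.2) (fun ω => ω.2.1)} with hS2
  have hsub : S2 ⊆ S1 := by
    rintro r ⟨𝒰, i𝒰, q, f, hq, hmarg, hmk2, hdist, hr⟩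
    exact ⟨𝒰, i𝒰, q, f, hq, hmarg, dirA_markov1 q T hq hmk2, hdist,
      hr.trans (dirA_rate q T hq hmk2)⟩
  have hmap : ∀ r ∈ S1, ∃ r' ∈ S2, r' ≤ r := by
    rintro r ⟨𝒰, i𝒰, q, f, hq, hmarg, hmk1, hdist, hr⟩
    have h𝒰 : Nonempty 𝒰 := nonempty_of_pmf q hq
    refine ⟨condMI (newQ p q T) (fun ω => T ω.1) (fun ω => ω.2.2.2) (fun ω => ω.2.1),
      ⟨𝒰, i𝒰, newQ p q T, f, newQ_isPMF p q T h𝒰 hp hq.1 hmarg,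
        newQ_sum_u p q T h𝒰 hq.1 hmarg,
        newQ_markov2 p q T h𝒰 hq.1 hmarg, ?_, rfl⟩, ?_⟩
    · rw [newQ_dist p q T d f h𝒰 hp0 hq.1 hmarg hmk1 hsuff]
      exact hdist
    · rw [hr]
      exact newQ_rate p q T h𝒰 hp0 hq hmarg hmk1 hsuff
  have hb1 : ∀ r ∈ S1, (0:ℝ) ≤ r := by
    rintro r ⟨𝒰, i𝒰, q, f, hq, -, -, -, hr⟩
    rw [hr]; exact condMI_nonneg q hq _ _ _
  have hb2 : ∀ r ∈ S2, (0:ℝ) ≤ r := by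
    rintro r ⟨𝒰, i𝒰, q, f, hq, -, -, -, hr⟩
    rw [hr]; exact condMI_nonneg q hq _ _ _
  rcases S1.eq_empty_or_nonempty with h | h
  · have h2 : S2 = ∅ := Set.subset_empty_iff.mp (h ▸ hsub)
    rw [h, h2]
  · obtain ⟨r0, hr0⟩ := h
    obtain ⟨r0', hr0', -⟩ := hmap r0 hr0
    refine le_antisymm (csInf_le_csInf ⟨0, fun r hr => hb1 r hr⟩ ⟨r0', hr0'⟩ hsub)
      (le_csInf ⟨r0, hr0⟩ fun r hr => ?_)
    obtain ⟨r', hr', hle⟩ := hmap r hr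
    exact (csInf_le ⟨0, fun s hs => hb2 s hs⟩ hr').trans hle
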